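/- arXiv:2103.06868 — 3 statements merged into one kernel-verified Lean document; each statement's English description precedes it below -/
import Mathlib

section
/- Let L be an infinite field, let T be a non-discrete system of topologies over L, and let O be a nonempty T-open subset of L^m = 𝔸^m_L(L). Then O is Zariski dense in 𝔸^m_L. -/
open AlgebraicGeometry CategoryTheory Topology

universe u

noncomputable section

/-- `Spec` of a field `L`, as a scheme. -/
abbrev SpecF (L : Type u) [Field L] : Scheme.{u} := Spec (CommRingCat.of L)

/-- A morphism `f : X ⟶ Spec L` exhibits `X` as an `L`-variety if it is separated and of
finite type. -/
def IsVar {L : Type u} [Field L] {X : Scheme.{u}} (f : X ⟶ SpecF L) : Prop :=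
  IsSeparated f ∧ LocallyOfFiniteType f ∧ QuasiCompact f

/-- The set of `L`-rational points of a `K`-scheme `X` with structure morphism `f`,
relative to a field embedding `ι : K →+* L`; i.e. morphisms `Spec L ⟶ X` lying over
`Spec.map ι`. -/
def RatPts {K L : Type u} [Field K] [Field L] (ι : K →+* L) {X : Scheme.{u}}
    (f : X ⟶ SpecF K) : Set (SpecF L ⟶ X) :=
  {p | p ≫ f = Spec.map (CommRingCat.ofHom ι)}

/-- The map on rational points induced by a morphism `g : X ⟶ Y` over `Spec K`. -/
def ptsMap {K L : Type u} [Field K] [Field L] (ι : K →+* L) {X Y : Scheme.{u}}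
    {fX : X ⟶ SpecF K} {fY : Y ⟶ SpecF K} (g : X ⟶ Y) (hg : g ≫ fY = fX)
    (p : RatPts ι fX) : RatPts ι fY :=
  ⟨p.1 ≫ g, by
    show (p.1 ≫ g) ≫ fY = _
    rw [Category.assoc, hg]
    exact p.2⟩

/-- The image of a set of rational points in the underlying topological space of `X`
(`Spec L` has a unique point, namely `default`). -/
def ptsImage {K L : Type u} [Field K] [Field L] (ι : K →+* L) {X : Scheme.{u}}
    (f : X ⟶ SpecF K) (O : Set (RatPts ι f)) : Set X :=
  (fun p : RatPts ι f => p.1.base default) '' O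

/-- `X` is smooth over `L` at the point `x` if some open neighbourhood of `x` is smooth
over `L`. -/
def VarSmoothAt {L : Type u} [Field L] {X : Scheme.{u}} (f : X ⟶ SpecF L) (x : X) : Prop :=
  ∃ U : X.Opens, x ∈ U ∧ IsSmooth (U.ι ≫ f)

/-- A field `L` is large if every smooth `L`-curve with an `L`-rational point has
infinitely many `L`-rational points. -/
def IsLargeField (L : Type u) [Field L] : Prop :=
  ∀ (C : Scheme.{u}) (f : C ⟶ SpecF L), IsSmooth f → IsVar f →
    topologicalKrullDim C = 1 →
    (RatPts (RingHom.id L) f).Nonempty → (RatPts (RingHom.id L) f).Infinite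

/-- A system of topologies over `L`: a topology on `V(L)` for each `L`-variety `V` such
that induced maps on points are continuous, open immersions induce open topological
embeddings, and closed immersions induce closed topological embeddings. -/
structure SystemOfTopologies (L : Type u) [Field L] where
  top : ∀ {X : Scheme.{u}} (f : X ⟶ SpecF L), TopologicalSpace (RatPts (RingHom.id L) f)
  continuous_ptsMap : ∀ {X Y : Scheme.{u}} {fX : X ⟶ SpecF L} {fY : Y ⟶ SpecF L},
    IsVar fX → IsVar fY → ∀ (g : X ⟶ Y) (hg : g ≫ fY = fX),
      @Continuous _ _ (top fX) (top fY) (ptsMap (RingHom.id L) g hg)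
  isOpenEmbedding_ptsMap : ∀ {X Y : Scheme.{u}} {fX : X ⟶ SpecF L} {fY : Y ⟶ SpecF L},
    IsVar fX → IsVar fY → ∀ (g : X ⟶ Y) (hg : g ≫ fY = fX), IsOpenImmersion g →
      @Topology.IsOpenEmbedding _ _ (top fX) (top fY) (ptsMap (RingHom.id L) g hg)
  isClosedEmbedding_ptsMap : ∀ {X Y : Scheme.{u}} {fX : X ⟶ SpecF L} {fY : Y ⟶ SpecF L},
    IsVar fX → IsVar fY → ∀ (g : X ⟶ Y) (hg : g ≫ fY = fX), IsClosedImmersion g →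
      @Topology.IsClosedEmbedding _ _ (top fX) (top fY) (ptsMap (RingHom.id L) g hg)

/-- Affine `m`-space over `K`. -/
abbrev AffSp (K : Type u) [Field K] (m : ℕ) : Scheme.{u} :=
  Spec (CommRingCat.of (MvPolynomial (Fin m) K))

/-- The structure morphism of affine `m`-space over `K`. -/
def affStr (K : Type u) [Field K] (m : ℕ) : AffSp K m ⟶ SpecF K :=
  Spec.map (CommRingCat.ofHom MvPolynomial.C)

/-- The `L`-rational point of `𝔸ᵐ_K` with coordinates `a : Fin m → L`. -/
def affPt {K L : Type u} [Field K] [Field L] (ι : K →+* L) {m : ℕ} (a : Fin m → L) :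
    RatPts ι (affStr K m) :=
  ⟨Spec.map (CommRingCat.ofHom (MvPolynomial.eval₂Hom ι a)), by
    show Spec.map _ ≫ Spec.map _ = _
    rw [← Spec.map_comp]
    congr 1
    ext x
    exact MvPolynomial.eval₂Hom_C ι a x⟩

/-- A system of topologies is discrete if the topology on `L = 𝔸¹_L(L)` is discrete. -/
def SystemOfTopologies.Discrete {L : Type u} [Field L] (S : SystemOfTopologies L) : Prop :=
  S.top (affStr L 1) = ⊥

/-- The étale open topology on `V(L)`: generated by images of `L`-points of étale
morphisms of `L`-varieties `W ⟶ V`. -/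
def etaleOpenTop {L : Type u} [Field L] {X : Scheme.{u}} (f : X ⟶ SpecF L) :
    TopologicalSpace (RatPts (RingHom.id L) f) :=
  TopologicalSpace.generateFrom
    {O | ∃ (W : Scheme.{u}) (h : W ⟶ X), IsEtale h ∧ IsVar (h ≫ f) ∧
      O = Set.range (ptsMap (RingHom.id L) h rfl)}

/-- The inclusion `V(K) ⊆ V(L)` for a `K`-variety `V` and a field embedding `ι : K →+* L`. -/
def extendPt {K L : Type u} [Field K] [Field L] (ι : K →+* L) {X : Scheme.{u}}
    {f : X ⟶ SpecF K} (q : RatPts (RingHom.id K) f) : RatPts ι f :=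
  ⟨Spec.map (CommRingCat.ofHom ι) ≫ q.1, by
    have h2 := q.2
    show (Spec.map (CommRingCat.ofHom ι) ≫ q.1) ≫ f = _
    rw [Category.assoc, h2]
    show Spec.map _ ≫ Spec.map _ = _
    rw [← Spec.map_comp]
    congr 1⟩

/-- For an irreducible `K`-variety with structure morphism `f`, the canonical
`K`-algebra structure map `K →+* K(X)` into the function field. -/
def structToFunctionField {K : Type u} [Field K] {X : Scheme.{u}} [IrreducibleSpace X]
    (f : X ⟶ SpecF K) : K →+* X.functionField :=
  haveI : Nonempty X := IrreducibleSpace.toNonempty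
  haveI : Nonempty (⊤ : X.Opens) := ⟨⟨Classical.arbitrary X, trivial⟩⟩
  ((Scheme.ΓSpecIso (CommRingCat.of K)).inv ≫ f.appTop ≫ X.germToFunctionField ⊤ :
    CommRingCat.of K ⟶ X.functionField).hom


section PropAAux

open MvPolynomial

variable {L : Type u} [Field L] {m n : ℕ}

lemma isVar_affStr : IsVar (affStr L m) := by
  refine ⟨inferInstance, ?_, inferInstance⟩
  show LocallyOfFiniteType (Spec.map (CommRingCat.ofHom MvPolynomial.C))
  rw [HasRingHomProperty.Spec_iff (P := @LocallyOfFiniteType)]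
  show RingHom.FiniteType _
  unfold RingHom.FiniteType
  exact (RingHom.finiteType_algebraMap (A := L) (B := MvPolynomial (Fin m) L)).mpr inferInstance

lemma specMap_ofHom_id_eq : Spec.map (CommRingCat.ofHom (RingHom.id L)) = 𝟙 (SpecF L) := by
  rw [show CommRingCat.ofHom (RingHom.id L) = 𝟙 (CommRingCat.of L) from rfl, Spec.map_id]

lemma isVar_id : IsVar (Spec.map (CommRingCat.ofHom (RingHom.id L)) : SpecF L ⟶ SpecF L) := by
  refine ⟨inferInstance, ?_, inferInstance⟩
  rw [HasRingHomProperty.Spec_iff (P := @LocallyOfFiniteType)]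
  exact RingHom.FiniteType.id L

lemma exists_affPt (p : RatPts (RingHom.id L) (affStr L m)) :
    ∃ a : Fin m → L, p = affPt (RingHom.id L) a := by
  obtain ⟨φ, hφ⟩ : ∃ φ, Spec.map φ = p.1 := ⟨Spec.preimage p.1, Spec.map_preimage _⟩
  have h2 : CommRingCat.ofHom MvPolynomial.C ≫ φ = CommRingCat.ofHom (RingHom.id L) := by
    apply Spec.map_injective
    rw [Spec.map_comp, hφ]
    exact p.2
  refine ⟨fun i => φ (MvPolynomial.X i), ?_⟩
  apply Subtype.ext
  show p.1 = Spec.map _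
  rw [← hφ, Spec.map_inj]
  apply CommRingCat.hom_ext
  apply MvPolynomial.ringHom_ext
  · intro r
    have h3 := congrArg (fun (ψ : CommRingCat.of L ⟶ CommRingCat.of L) => ψ r) h2
    simpa [eval₂Hom_C] using h3
  · intro i
    simp [eval₂Hom_X']

lemma affPt_injective : Function.Injective (affPt (RingHom.id L) : (Fin m → L) → _) := by
  intro a b hab
  have h1 : Spec.map (CommRingCat.ofHom (eval₂Hom (RingHom.id L) a)) =
      Spec.map (CommRingCat.ofHom (eval₂Hom (RingHom.id L) b)) := congrArg Subtype.val hab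
  have h2 := Spec.map_injective h1
  funext i
  have h3 := congrArg (fun (ψ : CommRingCat.of (MvPolynomial (Fin m) L) ⟶ CommRingCat.of L) =>
    ψ (MvPolynomial.X i)) h2
  simpa [eval₂Hom_X'] using h3

lemma line_hg (σ : MvPolynomial (Fin m) L →+* MvPolynomial (Fin n) L)
    (hσ : σ.comp MvPolynomial.C = MvPolynomial.C) :
    Spec.map (CommRingCat.ofHom σ) ≫ affStr L m = affStr L n := by
  show Spec.map _ ≫ Spec.map _ = Spec.map _
  rw [← Spec.map_comp, Spec.map_inj]
  rw [← CommRingCat.ofHom_comp, hσ]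

lemma ptsMap_affPt (σ : MvPolynomial (Fin m) L →+* MvPolynomial (Fin n) L)
    (hg : Spec.map (CommRingCat.ofHom σ) ≫ affStr L m = affStr L n) (b : Fin n → L) :
    ptsMap (RingHom.id L) (Spec.map (CommRingCat.ofHom σ)) hg (affPt (RingHom.id L) b)
      = affPt (RingHom.id L) (fun i => eval₂Hom (RingHom.id L) b (σ (MvPolynomial.X i))) := by
  apply Subtype.ext
  show Spec.map _ ≫ Spec.map _ = Spec.map _
  rw [← Spec.map_comp, Spec.map_inj]
  apply CommRingCat.hom_ext
  apply MvPolynomial.ringHom_ext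
  · intro r
    have hC : σ (MvPolynomial.C r) = MvPolynomial.C r := by
      have h2 : CommRingCat.ofHom MvPolynomial.C ≫ (CommRingCat.ofHom σ) =
          CommRingCat.ofHom MvPolynomial.C := by
        apply Spec.map_injective
        rw [Spec.map_comp]
        exact hg
      exact congrArg (fun (ψ : CommRingCat.of L ⟶ CommRingCat.of (MvPolynomial (Fin n) L)) =>
        ψ r) h2
    show eval₂Hom (RingHom.id L) b (σ (MvPolynomial.C r)) = _
    rw [hC]
    simp [eval₂Hom_C]
  · intro i
    simp [eval₂Hom_X']

/-- Every singleton of `𝔸ᵐ(L)` is closed in any system of topologies. -/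
lemma ratPts_isClosed_singleton (S : SystemOfTopologies L)
    (p : RatPts (RingHom.id L) (affStr L m)) :
    IsClosed[S.top (affStr L m)] {p} := by
  letI := S.top (affStr L m)
  letI := S.top (Spec.map (CommRingCat.ofHom (RingHom.id L)) : SpecF L ⟶ SpecF L)
  obtain ⟨a, rfl⟩ := exists_affPt p
  have hsurj : Function.Surjective
      (CommRingCat.ofHom (eval₂Hom (RingHom.id L) a) :
        CommRingCat.of (MvPolynomial (Fin m) L) ⟶ CommRingCat.of L) := by
    intro x
    exact ⟨MvPolynomial.C x, by simp [eval₂Hom_C]⟩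
  have hci : IsClosedImmersion (affPt (RingHom.id L) a).1 :=
    IsClosedImmersion.spec_of_surjective _ hsurj
  have hce := S.isClosedEmbedding_ptsMap isVar_id isVar_affStr
    (affPt (RingHom.id L) a).1 (affPt (RingHom.id L) a).2 hci
  have hrange := hce.isClosed_range
  convert hrange using 1
  have huniq : ∀ q : RatPts (RingHom.id L)
      (Spec.map (CommRingCat.ofHom (RingHom.id L)) : SpecF L ⟶ SpecF L),
      q.1 = 𝟙 (SpecF L) := by
    intro q
    have h3 : q.1 ≫ 𝟙 (SpecF L) = 𝟙 (SpecF L) := by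
      rw [← specMap_ofHom_id_eq]; exact q.2
    simpa using h3
  ext q
  simp only [Set.mem_singleton_iff, Set.mem_range]
  constructor
  · intro hq
    refine ⟨⟨𝟙 (SpecF L), show 𝟙 (SpecF L) ≫ Spec.map (CommRingCat.ofHom (RingHom.id L)) =
      Spec.map (CommRingCat.ofHom (RingHom.id L)) from Category.id_comp _⟩, ?_⟩
    apply Subtype.ext
    show 𝟙 (SpecF L) ≫ _ = _
    rw [Category.id_comp, hq]
  · rintro ⟨r, rfl⟩
    apply Subtype.ext
    show r.1 ≫ _ = _
    rw [huniq r, Category.id_comp]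

/-- If some singleton of `𝔸¹(L)` is open, the system of topologies is discrete. -/
lemma discrete_of_isOpen_singleton (S : SystemOfTopologies L) (b₀ : Fin 1 → L)
    (h : IsOpen[S.top (affStr L 1)] {affPt (RingHom.id L) b₀}) :
    S.Discrete := by
  letI := S.top (affStr L 1)
  refine eq_bot_of_singletons_open fun q => ?_
  obtain ⟨c, rfl⟩ := exists_affPt q
  set σ : MvPolynomial (Fin 1) L →+* MvPolynomial (Fin 1) L :=
    eval₂Hom MvPolynomial.C
      (fun i => MvPolynomial.X i + MvPolynomial.C (b₀ i - c i)) with hσdef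
  have hσ : σ.comp MvPolynomial.C = MvPolynomial.C := by
    apply RingHom.ext; intro r; simp [hσdef, eval₂Hom_C]
  have hg := line_hg σ hσ
  have hcont := S.continuous_ptsMap isVar_affStr isVar_affStr
    (Spec.map (CommRingCat.ofHom σ)) hg
  have hopen := hcont.isOpen_preimage _ h
  convert hopen using 1
  have hcomp : ∀ d : Fin 1 → L,
      (fun i => eval₂Hom (RingHom.id L) d (σ (MvPolynomial.X i)))
        = fun i => d i + (b₀ i - c i) := by
    intro d
    funext i
    simp [hσdef, eval₂Hom_X', eval₂Hom_C]
  ext r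
  obtain ⟨d, rfl⟩ := exists_affPt r
  simp only [Set.mem_singleton_iff, Set.mem_preimage]
  rw [ptsMap_affPt, hcomp d]
  constructor
  · intro h1
    obtain rfl : d = c := affPt_injective h1
    congr 1
    funext i
    ring
  · intro h1
    have h2 := affPt_injective h1
    congr 1
    funext i
    have h3 := congrFun h2 i
    linear_combination h3

lemma eval_line (a v : Fin m → L) (f : MvPolynomial (Fin m) L) (t : L) :
    Polynomial.eval t (MvPolynomial.eval₂ Polynomial.C
      (fun i => Polynomial.C (a i) + Polynomial.C (v i) * Polynomial.X) f)
      = MvPolynomial.eval (fun i => a i + v i * t) f := by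
  have h1 := MvPolynomial.eval₂_comp_left (Polynomial.evalRingHom t) (Polynomial.C)
    (fun i => Polynomial.C (a i) + Polynomial.C (v i) * Polynomial.X) f
  simp only [Polynomial.coe_evalRingHom] at h1
  rw [h1]
  have h2 : (Polynomial.evalRingHom t).comp Polynomial.C = RingHom.id L := by
    apply RingHom.ext; intro r; simp
  have h3 : (Polynomial.eval t ∘ fun i =>
      Polynomial.C (a i) + Polynomial.C (v i) * Polynomial.X) = fun i => a i + v i * t := by
    funext i; simp
  rw [h2, h3, MvPolynomial.eval₂_id]

lemma discrete_of_bad [Infinite L] (S : SystemOfTopologies L)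
    (O : Set (RatPts (RingHom.id L) (affStr L m)))
    (hO : IsOpen[S.top (affStr L m)] O) (a₀ : Fin m → L)
    (ha₀ : affPt (RingHom.id L) a₀ ∈ O) (f : MvPolynomial (Fin m) L) (hf : f ≠ 0)
    (hall : ∀ a : Fin m → L, affPt (RingHom.id L) a ∈ O → MvPolynomial.eval a f = 0) :
    S.Discrete := by
  letI := S.top (affStr L 1)
  letI := S.top (affStr L m)
  have hy : ∃ y : Fin m → L, MvPolynomial.eval y f ≠ 0 := by
    by_contra hcon
    push_neg at hcon
    exact hf (MvPolynomial.funext fun x => by rw [hcon x, map_zero])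
  obtain ⟨y, hy⟩ := hy
  set v : Fin m → L := fun i => y i - a₀ i with hv
  set σ : MvPolynomial (Fin m) L →+* MvPolynomial (Fin 1) L :=
    eval₂Hom MvPolynomial.C
      (fun i => MvPolynomial.C (a₀ i) + MvPolynomial.C (v i) * MvPolynomial.X 0) with hσdef
  have hσ : σ.comp MvPolynomial.C = MvPolynomial.C := by
    apply RingHom.ext; intro r; simp [hσdef, eval₂Hom_C]
  have hg := line_hg σ hσ
  have hΦ : ∀ b : Fin 1 → L,
      ptsMap (RingHom.id L) (Spec.map (CommRingCat.ofHom σ)) hg (affPt (RingHom.id L) b)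
        = affPt (RingHom.id L) (fun i => a₀ i + v i * b 0) := by
    intro b
    rw [ptsMap_affPt]
    congr 1
    funext i
    simp [hσdef, eval₂Hom_X', eval₂Hom_C]
  have hcont := S.continuous_ptsMap isVar_affStr isVar_affStr
    (Spec.map (CommRingCat.ofHom σ)) hg
  set O' : Set (RatPts (RingHom.id L) (affStr L 1)) :=
    (ptsMap (RingHom.id L) (Spec.map (CommRingCat.ofHom σ)) hg) ⁻¹' O with hO'def
  have hO'open : IsOpen O' := hcont.isOpen_preimage _ hO
  have hp₀ : affPt (RingHom.id L) (fun _ => (0 : L)) ∈ O' := by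
    show ptsMap _ _ _ _ ∈ O
    rw [hΦ]
    convert ha₀ using 2
    funext i
    simp
  set gp : Polynomial L := MvPolynomial.eval₂ Polynomial.C
    (fun i => Polynomial.C (a₀ i) + Polynomial.C (v i) * Polynomial.X) f with hgp
  have hgp0 : gp ≠ 0 := by
    intro hcon
    apply hy
    have h4 := eval_line a₀ v f 1
    rw [← hgp, hcon] at h4
    simp only [Polynomial.eval_zero] at h4
    have h5 : (fun i => a₀ i + v i * 1) = y := by funext i; simp [hv]
    rw [h5] at h4
    exact h4.symm
  have hsub : O' ⊆ (fun t : L => affPt (RingHom.id L) (fun _ : Fin 1 => t)) ''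
      {t | gp.IsRoot t} := by
    intro r hr
    obtain ⟨b, rfl⟩ := exists_affPt r
    have hb : b = fun _ : Fin 1 => b 0 := funext fun i => by
      rw [Subsingleton.elim i 0]
    refine ⟨b 0, ?_, (congrArg (affPt (RingHom.id L)) hb).symm⟩
    have hmem : affPt (RingHom.id L) (fun i => a₀ i + v i * b 0) ∈ O := by
      rw [← hΦ b]; exact hr
    have h6 := hall _ hmem
    show Polynomial.eval (b 0) gp = 0
    rw [hgp, eval_line]
    exact h6
  have hfin : O'.Finite :=
    Set.Finite.subset ((Polynomial.finite_setOf_isRoot hgp0).image _) hsub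
  have hrestclosed : IsClosed (O' \ {affPt (RingHom.id L) (fun _ : Fin 1 => (0 : L))}) := by
    have hfin2 : (O' \ {affPt (RingHom.id L) (fun _ : Fin 1 => (0 : L))}).Finite :=
      hfin.diff
    rw [← Set.biUnion_of_singleton (O' \ {affPt (RingHom.id L) (fun _ : Fin 1 => (0 : L))})]
    exact hfin2.isClosed_biUnion fun q _ => ratPts_isClosed_singleton S q
  have hsingleton : IsOpen {affPt (RingHom.id L) (fun _ : Fin 1 => (0 : L))} := by
    have h7 := hO'open.inter hrestclosed.isOpen_compl
    convert h7 using 1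
    ext q
    simp only [Set.mem_singleton_iff, Set.mem_inter_iff, Set.mem_compl_iff, Set.mem_diff,
      not_and, not_not]
    constructor
    · rintro rfl
      exact ⟨hp₀, fun _ => rfl⟩
    · rintro ⟨hq, himp⟩
      exact himp hq
  exact discrete_of_isOpen_singleton S _ hsingleton

end PropAAux

/-- **Proposition A**. If `T` is a non-discrete system of topologies over an infinite
field `L` and `O` is a nonempty `T`-open subset of `L^m = 𝔸^m_L(L)`, then `O` is Zariski
dense in `𝔸^m_L`. -/
theorem propA (L : Type u) [Field L] [Infinite L] (S : SystemOfTopologies L)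
    (hS : ¬ S.Discrete) (m : ℕ) (O : Set (RatPts (RingHom.id L) (affStr L m)))
    (hO : IsOpen[S.top (affStr L m)] O) (hne : O.Nonempty) :
    Dense (ptsImage (RingHom.id L) (affStr L m) O) := by
  classical
  have key : ∀ f : MvPolynomial (Fin m) L, f ≠ 0 →
      ∃ a : Fin m → L, affPt (RingHom.id L) a ∈ O ∧ MvPolynomial.eval a f ≠ 0 := by
    intro f hf
    by_contra h
    push_neg at h
    obtain ⟨p, hp⟩ := hne
    obtain ⟨a₀, rfl⟩ := exists_affPt p
    exact hS (discrete_of_bad S O hO a₀ hp f hf h)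
  rw [dense_iff_inter_open]
  intro U hU hUne
  obtain ⟨x, hx⟩ := hUne
  obtain ⟨s, ⟨g, rfl⟩, hxs, hsU⟩ :=
    PrimeSpectrum.isTopologicalBasis_basic_opens.exists_subset_of_mem_open hx hU
  have hg0 : g ≠ 0 := by
    intro hcon
    rw [hcon] at hxs
    simp at hxs
    exact hxs
  obtain ⟨a, haO, hafne⟩ := key g hg0
  refine ⟨(affPt (RingHom.id L) a).1.base default, hsU ?_, ⟨affPt (RingHom.id L) a, haO, rfl⟩⟩
  show (affPt (RingHom.id L) a).1.base default ∈ PrimeSpectrum.basicOpen g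
  erw [PrimeSpectrum.mem_basicOpen]
  show g ∉ (PrimeSpectrum.comap (CommRingCat.ofHom
    (MvPolynomial.eval₂Hom (RingHom.id L) a)).hom _).asIdeal
  intro hmem
  apply hafne
  have hb : ∀ y : PrimeSpectrum L, y.asIdeal = ⊥ := fun y => Ideal.eq_bot_of_prime _
  erw [PrimeSpectrum.comap_asIdeal, Ideal.mem_comap, hb, Ideal.mem_bot] at hmem
  simpa using hmem
end
end

section
/- Let F be a field, let S be an F-vector space of dimension at least 2, let I be an index set, and for each i ∈ I let S_i be a one-dimensional F-subspace of S. If S = ⋃_{i ∈ I} S_i, then the cardinality of I is at least the cardinality of F. -/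
universe u v

/-- If an `F`-vector space `S` of dimension at least `2` is covered by a family of
one-dimensional subspaces `S_i` indexed by `I`, then `|I| ≥ |F|`. -/
theorem oneDimCover (F : Type u) [Field F] (S : Type u) [AddCommGroup S] [Module F S]
    (hS : 2 ≤ Module.rank F S) (I : Type v) (Si : I → Submodule F S)
    (hdim : ∀ i, Module.rank F (Si i) = 1)
    (hcover : (⋃ i, (Si i : Set S)) = Set.univ) :
    Cardinal.lift.{v} (Cardinal.mk F) ≤ Cardinal.lift.{u} (Cardinal.mk I) := by
  obtain ⟨f, hf⟩ := exists_linearIndependent_of_le_rank (R := F) (M := S) (n := 2)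
    (by exact_mod_cast hS)
  set x := f 0
  set y := f 1
  -- for each a : F, x + a • y lies in some Si i
  have hmem : ∀ a : F, ∃ i, x + a • y ∈ Si i := by
    intro a
    have : x + a • y ∈ ⋃ i, (Si i : Set S) := hcover ▸ Set.mem_univ _
    simpa using this
  choose g hg using hmem
  -- g is injective
  have hginj : Function.Injective g := by
    intro a b hab
    by_contra hne
    have h1 : x + a • y ∈ Si (g a) := hg a
    have h2 : x + b • y ∈ Si (g a) := hab ▸ hg b
    have hy : (a - b) • y ∈ Si (g a) := by
      have := (Si (g a)).sub_mem h1 h2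
      simpa [sub_smul, add_sub_add_left_eq_sub] using this
    have hy' : y ∈ Si (g a) := by
      have := (Si (g a)).smul_mem (a - b)⁻¹ hy
      rwa [smul_smul, inv_mul_cancel₀ (sub_ne_zero.mpr hne), one_smul] at this
    have hx' : x ∈ Si (g a) := by
      have := (Si (g a)).sub_mem h1 ((Si (g a)).smul_mem a hy')
      simpa using this
    -- then x, y give two linearly independent elements of Si (g a), contradicting rank 1
    have hfmem : ∀ j : Fin 2, f j ∈ Si (g a) := by
      intro j
      fin_cases j <;> assumption
    set f' : Fin 2 → Si (g a) := fun j => ⟨f j, hfmem j⟩ with hf'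
    have hf'li : LinearIndependent F f' := by
      apply LinearIndependent.of_comp (Si (g a)).subtype
      convert hf
      rfl
    have := hf'li.cardinal_lift_le_rank
    rw [hdim (g a)] at this
    simp [Cardinal.mk_fin] at this
  exact Cardinal.lift_mk_le'.mpr ⟨⟨g, hginj⟩⟩
end

section
/- Let L be an infinite field, let K be a proper subfield of L, and let X be a subset of L such that X·X^{-1} = { a/b : a ∈ X, b ∈ X, b ≠ 0 } equals L. Then the cardinality of X \ K equals the cardinality of L. -/
universe u

set_option maxHeartbeats 1000000 in
/-- If `K` is a proper subfield of an infinite field `L` and `X ⊆ L` satisfies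
`X·X⁻¹ = L`, then `|X \\ K| = |L|`. -/
theorem largeDifference (L : Type u) [Field L] [Infinite L] (K : Subfield L) (hK : K ≠ ⊤)
    (X : Set L) (hX : {z : L | ∃ a ∈ X, ∃ b ∈ X, b ≠ 0 ∧ z = a / b} = Set.univ) :
    Cardinal.mk ↥(X \ ↑K) = Cardinal.mk L := by
  classical
  have hrep : ∀ w : L, ∃ a ∈ X, ∃ b ∈ X, b ≠ 0 ∧ w = a / b := fun w => by
    have : w ∈ {z : L | ∃ a ∈ X, ∃ b ∈ X, b ≠ 0 ∧ z = a / b} := by rw [hX]; trivial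
    exact this
  choose A hAX B hBX hB0 hAB using hrep
  have hABmul : ∀ w : L, w * B w = A w := fun w => (eq_div_iff (hB0 w)).mp (hAB w)
  obtain ⟨t, ht⟩ : ∃ t : L, t ∉ K := by
    by_contra h
    push_neg at h
    exact hK (Subfield.ext fun x => by simpa using h x)
  set Y : Set L := X \ ↑K with hYdef
  set Z : Set L := X ∩ ↑K with hZdef
  set s : Set L := (↑K : Set L) with hsdef
  have hnotK : ∀ w : L, w ∉ K → ¬(A w ∈ K ∧ B w ∈ K) := by
    rintro w h ⟨h1, h2⟩
    exact h (by rw [hAB w]; exact K.div_mem h1 h2)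
  have htk : ∀ k : ↥s, (t + ↑k) ∉ K := by
    rintro k h
    apply ht
    have he : t = (t + ↑k) - ↑k := by ring
    rw [he]
    exact K.sub_mem h k.2
  -- injection giving |K| ≤ |Y|² + |Y| + |Y|
  let f : ↥s → (↥Y × ↥Y) ⊕ (↥Y ⊕ ↥Y) := fun k =>
    if h1 : A (t + ↑k) ∈ K then
      Sum.inr (Sum.inr ⟨B (t + ↑k), hBX _, fun h2 => hnotK _ (htk k) ⟨h1, h2⟩⟩)
    else if h2 : B (t + ↑k) ∈ K then
      Sum.inr (Sum.inl ⟨A (t + ↑k), hAX _, h1⟩)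
    else
      Sum.inl (⟨A (t + ↑k), hAX _, h1⟩, ⟨B (t + ↑k), hBX _, h2⟩)
  have hfinj : Function.Injective f := by
    intro k1 k2 hf
    have e1 := hABmul (t + ↑k1)
    have e2 := hABmul (t + ↑k2)
    have hker : (t + (k1 : L)) = (t + (k2 : L)) → k1 = k2 := fun h =>
      Subtype.ext (add_left_cancel h)
    by_cases h1 : A (t + ↑k1) ∈ K <;> by_cases h2 : A (t + ↑k2) ∈ K
    · -- both Sum.inr (Sum.inr _)
      simp only [f, dif_pos h1, dif_pos h2, Sum.inr.injEq, Subtype.mk.injEq, Subtype.ext_iff] at hf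
      by_contra hne
      have hkne : (k1 : L) ≠ (k2 : L) := fun h => hne (Subtype.ext h)
      have key : B (t + ↑k2) * ((k1 : L) - ↑k2) = A (t + ↑k1) - A (t + ↑k2) := by
        rw [hf] at e1
        linear_combination e1 - e2
      have hmem : B (t + ↑k2) ∈ K := by
        have hq : B (t + ↑k2) = (A (t + ↑k1) - A (t + ↑k2)) / ((k1 : L) - ↑k2) :=
          (eq_div_iff (sub_ne_zero.mpr hkne)).mpr key
        rw [hq]
        exact K.div_mem (K.sub_mem h1 h2) (K.sub_mem k1.2 k2.2)
      exact hnotK _ (htk k2) ⟨h2, hmem⟩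
    · by_cases hb2 : B (t + ↑k2) ∈ K
      · simp [f, dif_pos h1, dif_neg h2, dif_pos hb2] at hf
      · simp [f, dif_pos h1, dif_neg h2, dif_neg hb2] at hf
    · by_cases hb1 : B (t + ↑k1) ∈ K
      · simp [f, dif_neg h1, dif_pos h2, dif_pos hb1] at hf
      · simp [f, dif_neg h1, dif_pos h2, dif_neg hb1] at hf
    · by_cases hb1 : B (t + ↑k1) ∈ K <;> by_cases hb2 : B (t + ↑k2) ∈ K
      · -- both Sum.inr (Sum.inl _) : A's equal, B's in K
        simp only [f, dif_neg h1, dif_neg h2, dif_pos hb1, dif_pos hb2, Sum.inr.injEq,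
          Sum.inl.injEq, Subtype.mk.injEq, Subtype.ext_iff] at hf
        -- hf : A (t+k1) = A (t+k2)
        rw [hf] at e1
        by_cases hBe : B (t + ↑k1) = B (t + ↑k2)
        · rw [hBe] at e1
          exact hker (mul_right_cancel₀ (hB0 _) (e1.trans e2.symm))
        · exfalso
          apply ht
          have key : t * (B (t + ↑k1) - B (t + ↑k2)) =
              (k2 : L) * B (t + ↑k2) - (k1 : L) * B (t + ↑k1) := by
            linear_combination e1 - e2
          have hq : t = ((k2 : L) * B (t + ↑k2) - (k1 : L) * B (t + ↑k1)) /
              (B (t + ↑k1) - B (t + ↑k2)) :=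
            (eq_div_iff (sub_ne_zero.mpr hBe)).mpr key
          rw [hq]
          exact K.div_mem (K.sub_mem (K.mul_mem k2.2 hb2) (K.mul_mem k1.2 hb1))
            (K.sub_mem hb1 hb2)
      · simp [f, dif_neg h1, dif_neg h2, dif_pos hb1, dif_neg hb2] at hf
      · simp [f, dif_neg h1, dif_neg h2, dif_neg hb1, dif_pos hb2] at hf
      · -- both Sum.inl _
        simp only [f, dif_neg h1, dif_neg h2, dif_neg hb1, dif_neg hb2, Sum.inl.injEq,
          Prod.mk.injEq, Subtype.mk.injEq, Subtype.ext_iff] at hf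
        apply hker
        rw [hAB (t + ↑k1), hAB (t + ↑k2), hf.1, hf.2]
  -- injection giving |Kᶜ| ≤ |Y||Z| + |Z||Y| + |Y|²
  let g : ↥sᶜ → (↥Y × ↥Z) ⊕ ((↥Z × ↥Y) ⊕ (↥Y × ↥Y)) := fun w =>
    if h1 : A ↑w ∈ K then
      Sum.inr (Sum.inl (⟨A ↑w, hAX _, h1⟩, ⟨B ↑w, hBX _, fun h2 => hnotK _ w.2 ⟨h1, h2⟩⟩))
    else if h2 : B ↑w ∈ K then
      Sum.inl (⟨A ↑w, hAX _, h1⟩, ⟨B ↑w, hBX _, h2⟩)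
    else
      Sum.inr (Sum.inr (⟨A ↑w, hAX _, h1⟩, ⟨B ↑w, hBX _, h2⟩))
  have hginj : Function.Injective g := by
    intro w1 w2 hg
    have hker : A (↑w1 : L) = A ↑w2 → B (↑w1 : L) = B ↑w2 → w1 = w2 := by
      intro ha hb
      apply Subtype.ext
      rw [hAB (↑w1 : L), hAB (↑w2 : L), ha, hb]
    by_cases h1 : A (↑w1 : L) ∈ K <;> by_cases h2 : A (↑w2 : L) ∈ K
    · simp only [g, dif_pos h1, dif_pos h2, Sum.inr.injEq, Sum.inl.injEq, Prod.mk.injEq,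
        Subtype.mk.injEq, Subtype.ext_iff] at hg
      exact hker hg.1 hg.2
    · by_cases hb2 : B (↑w2 : L) ∈ K
      · simp [g, dif_pos h1, dif_neg h2, dif_pos hb2] at hg
      · simp [g, dif_pos h1, dif_neg h2, dif_neg hb2] at hg
    · by_cases hb1 : B (↑w1 : L) ∈ K
      · simp [g, dif_neg h1, dif_pos h2, dif_pos hb1] at hg
      · simp [g, dif_neg h1, dif_pos h2, dif_neg hb1] at hg
    · by_cases hb1 : B (↑w1 : L) ∈ K <;> by_cases hb2 : B (↑w2 : L) ∈ K
      · simp only [g, dif_neg h1, dif_neg h2, dif_pos hb1, dif_pos hb2, Sum.inl.injEq,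
          Prod.mk.injEq, Subtype.mk.injEq, Subtype.ext_iff] at hg
        exact hker hg.1 hg.2
      · simp [g, dif_neg h1, dif_neg h2, dif_pos hb1, dif_neg hb2] at hg
      · simp [g, dif_neg h1, dif_neg h2, dif_neg hb1, dif_pos hb2] at hg
      · simp only [g, dif_neg h1, dif_neg h2, dif_neg hb1, dif_neg hb2, Sum.inr.injEq,
          Prod.mk.injEq, Subtype.mk.injEq, Subtype.ext_iff] at hg
        exact hker hg.1 hg.2
  have c1 : Cardinal.mk ↥s ≤
      Cardinal.mk ↥Y * Cardinal.mk ↥Y + (Cardinal.mk ↥Y + Cardinal.mk ↥Y) := by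
    have h := Cardinal.mk_le_of_injective hfinj
    simpa [Cardinal.mk_sum, Cardinal.mk_prod, Cardinal.lift_id] using h
  have c2 : Cardinal.mk ↥sᶜ ≤ Cardinal.mk ↥Y * Cardinal.mk ↥Z +
      (Cardinal.mk ↥Z * Cardinal.mk ↥Y + Cardinal.mk ↥Y * Cardinal.mk ↥Y) := by
    have h := Cardinal.mk_le_of_injective hginj
    simpa [Cardinal.mk_sum, Cardinal.mk_prod, Cardinal.lift_id] using h
  have hZs : Cardinal.mk ↥Z ≤ Cardinal.mk ↥s :=
    Cardinal.mk_le_mk_of_subset Set.inter_subset_right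
  have htot : Cardinal.mk ↥s + Cardinal.mk ↥sᶜ = Cardinal.mk L := Cardinal.mk_sum_compl s
  rcases lt_or_ge (Cardinal.mk ↥Y) Cardinal.aleph0 with hlt | hge
  · exfalso
    have hs_lt : Cardinal.mk ↥s < Cardinal.aleph0 :=
      lt_of_le_of_lt c1 (Cardinal.add_lt_aleph0 (Cardinal.mul_lt_aleph0 hlt hlt)
        (Cardinal.add_lt_aleph0 hlt hlt))
    have hZ_lt : Cardinal.mk ↥Z < Cardinal.aleph0 := lt_of_le_of_lt hZs hs_lt
    have hc_lt : Cardinal.mk ↥sᶜ < Cardinal.aleph0 :=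
      lt_of_le_of_lt c2 (Cardinal.add_lt_aleph0 (Cardinal.mul_lt_aleph0 hlt hZ_lt)
        (Cardinal.add_lt_aleph0 (Cardinal.mul_lt_aleph0 hZ_lt hlt)
          (Cardinal.mul_lt_aleph0 hlt hlt)))
    have : Cardinal.mk L < Cardinal.aleph0 := by
      rw [← htot]; exact Cardinal.add_lt_aleph0 hs_lt hc_lt
    exact absurd this (not_lt.mpr (Cardinal.infinite_iff.mp inferInstance))
  · have hmul : Cardinal.mk ↥Y * Cardinal.mk ↥Y = Cardinal.mk ↥Y := Cardinal.mul_eq_self hge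
    have hadd : Cardinal.mk ↥Y + Cardinal.mk ↥Y = Cardinal.mk ↥Y := Cardinal.add_eq_self hge
    have hs_le : Cardinal.mk ↥s ≤ Cardinal.mk ↥Y := by
      calc Cardinal.mk ↥s ≤ _ := c1
        _ = Cardinal.mk ↥Y := by rw [hmul, hadd, hadd]
    have hZ_le : Cardinal.mk ↥Z ≤ Cardinal.mk ↥Y := hZs.trans hs_le
    have hc_le : Cardinal.mk ↥sᶜ ≤ Cardinal.mk ↥Y := by
      refine c2.trans ?_
      have t1 : Cardinal.mk ↥Y * Cardinal.mk ↥Z ≤ Cardinal.mk ↥Y := by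
        calc Cardinal.mk ↥Y * Cardinal.mk ↥Z ≤ Cardinal.mk ↥Y * Cardinal.mk ↥Y :=
              mul_le_mul' le_rfl hZ_le
          _ = Cardinal.mk ↥Y := hmul
      have t2 : Cardinal.mk ↥Z * Cardinal.mk ↥Y ≤ Cardinal.mk ↥Y := by
        calc Cardinal.mk ↥Z * Cardinal.mk ↥Y ≤ Cardinal.mk ↥Y * Cardinal.mk ↥Y :=
              mul_le_mul' hZ_le le_rfl
          _ = Cardinal.mk ↥Y := hmul
      calc Cardinal.mk ↥Y * Cardinal.mk ↥Z +
            (Cardinal.mk ↥Z * Cardinal.mk ↥Y + Cardinal.mk ↥Y * Cardinal.mk ↥Y)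
          ≤ Cardinal.mk ↥Y + (Cardinal.mk ↥Y + Cardinal.mk ↥Y) :=
            add_le_add t1 (add_le_add t2 hmul.le)
        _ = Cardinal.mk ↥Y := by rw [hadd, hadd]
    have hL_le : Cardinal.mk L ≤ Cardinal.mk ↥Y := by
      rw [← htot]
      calc Cardinal.mk ↥s + Cardinal.mk ↥sᶜ ≤ Cardinal.mk ↥Y + Cardinal.mk ↥Y :=
            add_le_add hs_le hc_le
        _ = Cardinal.mk ↥Y := hadd
    exact le_antisymm (Cardinal.mk_set_le Y) hL_le
end
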